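/- Let η, Ω be smooth functions with Ω = η' - η²/2, and define P̂ = (3/(πi))η, Q̂ = (18/π²)Ω, R̂ = (27i/π³)(Ω' - 2ηΩ). If η satisfies η''' - 6ηη'' + 9(η')² + (J-12)(η' - η²/2)² = 0, then the triple satisfies the Ramanujan-type system: (1/(2πi))P̂' = (P̂² - Q̂)/12, (1/(2πi))Q̂' = (P̂Q̂ - R̂)/3, (1/(2πi))R̂' = P̂R̂/2 - (J/24)Q̂². -/

import Mathlib

open Complex

set_option maxHeartbeats 1000000 in
theorem ramanujan_type_system (η Ω : ℂ → ℂ) (J : ℂ)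
    (hη : ContDiff ℂ ⊤ η)
    (hΩ : ∀ z, Ω z = deriv η z - (η z) ^ 2 / 2)
    (hchazy : ∀ z, deriv^[3] η z - 6 * η z * deriv^[2] η z + 9 * (deriv η z) ^ 2
        + (J - 12) * (deriv η z - (η z) ^ 2 / 2) ^ 2 = 0)
    (P Q R : ℂ → ℂ)
    (hP : ∀ z, P z = (3 / (Real.pi * I)) * η z)
    (hQ : ∀ z, Q z = (18 / (Real.pi : ℂ) ^ 2) * Ω z)
    (hR : ∀ z, R z = (27 * I / (Real.pi : ℂ) ^ 3) * (deriv Ω z - 2 * η z * Ω z)) :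
    (∀ z, (1 / (2 * Real.pi * I)) * deriv P z = ((P z) ^ 2 - Q z) / 12) ∧
    (∀ z, (1 / (2 * Real.pi * I)) * deriv Q z = (P z * Q z - R z) / 3) ∧
    (∀ z, (1 / (2 * Real.pi * I)) * deriv R z = P z * R z / 2 - (J / 24) * (Q z) ^ 2) := by
  have hπ : (Real.pi : ℂ) ≠ 0 := by
    exact_mod_cast Real.pi_ne_zero
  have hd : ∀ n, Differentiable ℂ (deriv^[n] η) := by
    intro n
    have h := ContDiff.iterate_deriv (𝕜 := ℂ) (F := ℂ) n (hη.of_le le_top)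
    exact h.differentiable (by simp)
  have hd0 : Differentiable ℂ η := hd 0
  have hd1 : Differentiable ℂ (deriv η) := hd 1
  have hd2 : Differentiable ℂ (deriv^[2] η) := hd 2
  have h21 : deriv^[2] η = deriv (deriv η) := rfl
  have h32 : deriv^[3] η = deriv (deriv^[2] η) := by
    rw [show (3 : ℕ) = 2 + 1 from rfl, Function.iterate_succ_apply']
  -- Ω as a function
  have hΩf : Ω = fun z => deriv η z - (η z) ^ 2 / 2 := funext hΩ
  -- deriv Ω
  have hdΩ : ∀ z, HasDerivAt Ω (deriv^[2] η z - η z * deriv η z) z := by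
    intro z
    rw [hΩf]
    have h := ((hd1 z).hasDerivAt).sub ((((hd0 z).hasDerivAt).pow 2).div_const 2)
    rw [h21]
    refine h.congr_deriv ?_
    ring
  have hΩd : Differentiable ℂ Ω := fun z => (hdΩ z).differentiableAt
  have hdΩeq : ∀ z, deriv Ω z = deriv^[2] η z - η z * deriv η z :=
    fun z => (hdΩ z).deriv
  have hdΩf : deriv Ω = fun z => deriv^[2] η z - η z * deriv η z := funext hdΩeq
  -- second derivative of Ω
  have hddΩ : ∀ z, HasDerivAt (deriv Ω)
      (deriv^[3] η z - ((deriv η z) ^ 2 + η z * deriv^[2] η z)) z := by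
    intro z
    rw [hdΩf]
    have h := ((hd2 z).hasDerivAt).sub (((hd0 z).hasDerivAt).mul ((hd1 z).hasDerivAt))
    rw [h32]
    refine h.congr_deriv ?_
    rw [h21]
    ring
  -- P
  have hPf : P = fun z => (3 / (Real.pi * I)) * η z := funext hP
  have hdP : ∀ z, deriv P z = (3 / (Real.pi * I)) * deriv η z := by
    intro z
    rw [hPf, deriv_const_mul _ (hd0 z)]
  -- Q
  have hQf : Q = fun z => (18 / (Real.pi : ℂ) ^ 2) * Ω z := funext hQ
  have hdQ : ∀ z, deriv Q z = (18 / (Real.pi : ℂ) ^ 2) * deriv Ω z := by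
    intro z
    rw [hQf, deriv_const_mul _ (hΩd z)]
  -- R
  have hRf : R = fun z => (27 * I / (Real.pi : ℂ) ^ 3) * (deriv Ω z - 2 * η z * Ω z) :=
    funext hR
  have hdR : ∀ z, deriv R z = (27 * I / (Real.pi : ℂ) ^ 3) *
      ((deriv^[3] η z - ((deriv η z) ^ 2 + η z * deriv^[2] η z))
        - 2 * (deriv η z * Ω z + η z * (deriv^[2] η z - η z * deriv η z))) := by
    intro z
    rw [hRf]
    have h : HasDerivAt (fun z => deriv Ω z - 2 * η z * Ω z)
        ((deriv^[3] η z - ((deriv η z) ^ 2 + η z * deriv^[2] η z))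
          - 2 * (deriv η z * Ω z + η z * (deriv^[2] η z - η z * deriv η z))) z := by
      have h2 : HasDerivAt (fun z => 2 * η z * Ω z)
          (2 * (deriv η z * Ω z + η z * (deriv^[2] η z - η z * deriv η z))) z := by
        have h3 := (((hd0 z).hasDerivAt).mul (hdΩ z)).const_mul (2:ℂ)
        simpa [mul_assoc] using h3
      exact (hddΩ z).sub h2
    rw [deriv_const_mul _ h.differentiableAt, h.deriv]
  have hI2 : (I:ℂ)^2 = -1 := Complex.I_sq
  have hI3 : (I:ℂ)^3 = -I := by rw [pow_succ, hI2]; ring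
  have hI4 : (I:ℂ)^4 = 1 := by rw [show (4:ℕ)=2*2 from rfl, pow_mul, hI2]; ring
  refine ⟨fun z => ?_, fun z => ?_, fun z => ?_⟩
  · rw [hdP z, hP z, hQ z, hΩ z]
    generalize η z = a; generalize deriv η z = b
    field_simp [Complex.I_ne_zero]
    ring_nf
    simp only [Complex.inv_I, Complex.I_sq, inv_pow]
    field_simp
    ring
  · rw [hdQ z, hdΩeq z, hP z, hQ z, hR z, hdΩeq z, hΩ z]
    generalize η z = a; generalize deriv η z = b; generalize deriv^[2] η z = c
    field_simp [Complex.I_ne_zero]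
    ring_nf
    simp only [Complex.inv_I, Complex.I_sq, inv_pow]
    field_simp
    ring_nf
  · have hc := hchazy z
    rw [hdR z, hP z, hR z, hdΩeq z, hQ z, hΩ z]
    generalize η z = a at hc ⊢; generalize deriv η z = b at hc ⊢
    generalize deriv^[2] η z = c at hc ⊢; generalize deriv^[3] η z = d at hc ⊢
    field_simp [Complex.I_ne_zero]
    ring_nf
    linear_combination 1296 * hc
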